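/- Every directed acyclic graph admits a topological ordering, and for a chordal undirected graph the reverse of a perfect elimination ordering induces an acyclic orientation without unshielded colliders; combining these, for any two adjacent vertices A, B in a chordal graph there exist consistent total orderings α and γ with A < B in α and B < A in γ, each inducing unshielded-collider-free DAGs. -/

import Mathlib

/-- Chordality of an undirected graph: every cycle of length at least 4 has a chord. -/
def ChordalGraph {V : Type*} (G : SimpleGraph V) : Prop :=
  ∀ ⦃v : V⦄ (c : G.Walk v v), c.IsCycle → 4 ≤ c.length →
    ∃ a b, a ∈ c.support ∧ b ∈ c.support ∧ G.Adj a b ∧ s(a, b) ∉ c.edges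

/-- The orientation of the undirected graph U induced by a strict total order r has an
unshielded collider. -/
def HasUCWrt {V : Type*} (U : SimpleGraph V) (r : V → V → Prop) : Prop :=
  ∃ a b c, (U.Adj a b ∧ r a b) ∧ (U.Adj c b ∧ r c b) ∧ a ≠ c ∧ ¬ U.Adj a c

namespace Stmt19

set_option linter.unusedVariables false


variable {V : Type*} {U : SimpleGraph V}

def Reach (U : SimpleGraph V) (W : Set V) (x y : V) : Prop :=
  Relation.ReflTransGen (fun u v => u ∈ W ∧ v ∈ W ∧ U.Adj u v) x y

theorem Reach.refl {W : Set V} {x : V} : Reach U W x x := Relation.ReflTransGen.refl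

theorem Reach.trans {W : Set V} {x y z : V} (h : Reach U W x y) (h' : Reach U W y z) :
    Reach U W x z := Relation.ReflTransGen.trans h h'

theorem Reach.tail {W : Set V} {x y z : V} (h : Reach U W x y) (hy : y ∈ W) (hz : z ∈ W)
    (hadj : U.Adj y z) : Reach U W x z := Relation.ReflTransGen.tail h ⟨hy, hz, hadj⟩

theorem Reach.symm {W : Set V} {x y : V} (h : Reach U W x y) : Reach U W y x := by
  induction h with
  | refl => exact Reach.refl
  | tail h step ih => exact Reach.trans (Relation.ReflTransGen.single ⟨step.2.1, step.1, step.2.2.symm⟩) ih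

theorem Reach.mem_right {W : Set V} {x y : V} (h : Reach U W x y) : y = x ∨ y ∈ W := by
  induction h with
  | refl => exact Or.inl rfl
  | tail h step ih => exact Or.inr step.2.1

theorem Reach.mono {W W' : Set V} (hWW : W ⊆ W') {x y : V} (h : Reach U W x y) :
    Reach U W' x y :=
  Relation.ReflTransGen.mono (r := fun u v => u ∈ W ∧ v ∈ W ∧ U.Adj u v)
    (p := fun u v => u ∈ W' ∧ v ∈ W' ∧ U.Adj u v)
    (fun a b hab => ⟨hWW hab.1, hWW hab.2.1, hab.2.2⟩) x y h

/-- Key minimality lemma: a path through `insert s W` either avoids `s` or witnesses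
neighbors of `s` on both sides. -/
theorem reach_insert {W : Set V} {s a b : V} (ha : a ≠ s) (h : Reach U (insert s W) a b) :
    (b = s → ∃ x, Reach U W a x ∧ U.Adj x s) ∧
    (b ≠ s → Reach U W a b ∨
      ((∃ x, Reach U W a x ∧ U.Adj x s) ∧ (∃ y, y ∈ W ∧ U.Adj s y ∧ Reach U W y b))) := by
  induction h with
  | refl =>
    exact ⟨fun h => absurd h ha, fun _ => Or.inl Reach.refl⟩
  | @tail c d h step ih =>
    obtain ⟨hcW', hdW', hadj⟩ := step
    constructor
    · intro hds
      rw [hds] at hadj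
      have hcs : c ≠ s := fun h => by subst h; exact U.irrefl hadj
      have hcW : c ∈ W := by rcases hcW' with h | h; exact absurd h hcs; exact h
      rcases ih.2 hcs with hreach | ⟨hx, _⟩
      · exact ⟨c, hreach, hadj⟩
      · exact hx
    · intro hds
      have hdW : d ∈ W := by rcases hdW' with h | h; exact absurd h hds; exact h
      by_cases hcs : c = s
      · subst hcs
        obtain ⟨x, hx1, hx2⟩ := ih.1 rfl
        exact Or.inr ⟨⟨x, hx1, hx2⟩, ⟨d, hdW, hadj, Reach.refl⟩⟩
      · have hcW : c ∈ W := by rcases hcW' with h | h; exact absurd h hcs; exact h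
        rcases ih.2 hcs with hreach | ⟨hx, y, hy1, hy2, hy3⟩
        · exact Or.inl (hreach.tail hcW hdW hadj)
        · exact Or.inr ⟨hx, y, hy1, hy2, hy3.tail hcW hdW hadj⟩

/-- From reachability extract a walk whose support consists of reachable vertices in `W` (or `a`). -/
theorem reach_walk {W : Set V} {a x : V} (h : Reach U W a x) :
    ∃ w : U.Walk a x, ∀ z ∈ w.support, Reach U W a z ∧ (z = a ∨ z ∈ W) := by
  induction h with
  | refl => exact ⟨SimpleGraph.Walk.nil, by intro z hz; simp at hz; subst hz; exact ⟨Reach.refl, Or.inl rfl⟩⟩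
  | @tail c d h step ih =>
    obtain ⟨w, hw⟩ := ih
    refine ⟨w.append (SimpleGraph.Walk.cons step.2.2 SimpleGraph.Walk.nil), ?_⟩
    intro z hz
    rw [SimpleGraph.Walk.mem_support_append_iff] at hz
    rcases hz with hz | hz
    · exact hw z hz
    · simp only [SimpleGraph.Walk.support_cons, SimpleGraph.Walk.support_nil, List.mem_cons,
        List.not_mem_nil, or_false] at hz
      rcases hz with hz | hz
      · subst hz; exact ⟨h, Or.inr step.1⟩
      · subst hz; exact ⟨Relation.ReflTransGen.tail h step, Or.inr step.2.1⟩

open SimpleGraph Walk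

/-- A walk of length 1 between `s` and `t` witnesses adjacency. -/
theorem adj_of_length_one {s t : V} (w : U.Walk s t) (h : w.length = 1) : U.Adj s t := by
  cases w with
  | nil => simp at h
  | cons hadj w' =>
    simp only [SimpleGraph.Walk.length_cons] at h
    have h0 : w'.length = 0 := by omega
    have := SimpleGraph.Walk.eq_of_length_eq_zero h0
    subst this
    exact hadj

/-- Chord shortcut: a chord on a walk yields a strictly shorter walk with smaller support. -/
theorem shortcut {s t : V} (p : U.Walk s t) {u v : V} (hu : u ∈ p.support) (hv : v ∈ p.support)
    (huv : U.Adj u v) (he : s(u, v) ∉ p.edges) :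
    ∃ q : U.Walk s t, q.length < p.length ∧ ∀ x ∈ q.support, x ∈ p.support := by
  classical
  induction p with
  | nil =>
    simp only [support_nil, List.mem_singleton] at hu hv
    subst hu; subst hv
    exact absurd huv (U.irrefl)
  | @cons a b c hab p ih =>
    simp only [support_cons, List.mem_cons] at hu hv
    by_cases hu' : u ∈ p.support
    · by_cases hv' : v ∈ p.support
      · have he' : s(u, v) ∉ p.edges := fun h => he (by simp [edges_cons, h])
        obtain ⟨q, hq1, hq2⟩ := ih hu' hv' he'
        exact ⟨Walk.cons hab q, by simpa using hq1,
          by intro x hx; simp only [support_cons, List.mem_cons] at hx ⊢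
             rcases hx with rfl | hx; exact Or.inl rfl; exact Or.inr (hq2 x hx)⟩
      · -- v = a, u ∈ p.support : chord from head a to u
        have hva : v = a := by rcases hv with h | h; exact h; exact absurd h hv'
        subst hva
        have hub : u ≠ b := by
          rintro rfl
          exact he (by simp [edges_cons, Sym2.eq_swap])
        refine ⟨Walk.cons huv.symm (p.dropUntil u hu'), ?_, ?_⟩
        · have hlen := congrArg Walk.length (p.take_spec hu')
          rw [length_append] at hlen
          have h1 : 1 ≤ (p.takeUntil u hu').length := by
            rcases Nat.eq_zero_or_pos (p.takeUntil u hu').length with h0 | h0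
            · exact absurd (SimpleGraph.Walk.eq_of_length_eq_zero h0).symm hub
            · exact h0
          simp only [length_cons]
          omega
        · intro x hx
          simp only [support_cons, List.mem_cons] at hx ⊢
          rcases hx with rfl | hx
          · exact Or.inl rfl
          · exact Or.inr (support_dropUntil_subset p hu' hx)
    · -- u = a
      have hua : u = a := by rcases hu with h | h; exact h; exact absurd h hu'
      subst hua
      have hv'' : v ∈ p.support := by
        rcases hv with h | h
        · exact absurd h.symm (U.ne_of_adj huv)
        · exact h
      have hvb : v ≠ b := by
        rintro rfl
        exact he (by simp [edges_cons])
      refine ⟨Walk.cons huv (p.dropUntil v hv''), ?_, ?_⟩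
      · have hlen := congrArg Walk.length (p.take_spec hv'')
        rw [length_append] at hlen
        have h1 : 1 ≤ (p.takeUntil v hv'').length := by
          rcases Nat.eq_zero_or_pos (p.takeUntil v hv'').length with h0 | h0
          · exact absurd (SimpleGraph.Walk.eq_of_length_eq_zero h0).symm hvb
          · exact h0
        simp only [length_cons]
        omega
      · intro x hx
        simp only [support_cons, List.mem_cons] at hx ⊢
        rcases hx with rfl | hx
        · exact Or.inl rfl
        · exact Or.inr (support_dropUntil_subset p hv'' hx)

/-- Existence of a chordless (induced) path within a vertex set. -/
theorem exists_chordless_path {s t : V} {C : Set V} (w : U.Walk s t)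
    (hw : ∀ z ∈ w.support, z ∈ C) :
    ∃ p : U.Walk s t, p.IsPath ∧ (∀ z ∈ p.support, z ∈ C) ∧
      ∀ u v, u ∈ p.support → v ∈ p.support → U.Adj u v → s(u, v) ∈ p.edges := by
  classical
  have hex : ∃ n, ∃ w' : U.Walk s t, w'.length = n ∧ ∀ z ∈ w'.support, z ∈ C :=
    ⟨w.length, w, rfl, hw⟩
  obtain ⟨w', hw'len, hw'C⟩ := Nat.find_spec hex
  have hmin : ∀ w'' : U.Walk s t, (∀ z ∈ w''.support, z ∈ C) → Nat.find hex ≤ w''.length :=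
    fun w'' hC => Nat.find_min' hex ⟨w'', rfl, hC⟩
  set p := w'.bypass with hp
  have hpPath : p.IsPath := w'.bypass_isPath
  have hpsub : ∀ z ∈ p.support, z ∈ w'.support := fun z hz => w'.support_bypass_subset hz
  have hpC : ∀ z ∈ p.support, z ∈ C := fun z hz => hw'C z (hpsub z hz)
  have hplen : p.length = Nat.find hex := by
    have h1 : p.length ≤ w'.length := w'.length_bypass_le
    have h2 := hmin p hpC
    omega
  refine ⟨p, hpPath, hpC, ?_⟩
  intro u v hu hv huv
  by_contra he
  obtain ⟨q, hq1, hq2⟩ := shortcut p hu hv huv he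
  have := hmin q (fun z hz => hpC z (hq2 z hz))
  omega

/-- Two internally disjoint chordless paths between nonadjacent vertices would form a
chordless cycle; hence by chordality the endpoints are adjacent. -/
theorem adj_of_two_paths (hU : ChordalGraph U) {s t : V} (hst : s ≠ t)
    {Ca Cb : Set V} (hdisj : ∀ x, x ∈ Ca → x ∉ Cb)
    (hsep : ∀ x ∈ Ca, ∀ y ∈ Cb, ¬ U.Adj x y)
    (hsCa : s ∉ Ca) (hsCb : s ∉ Cb) (htCa : t ∉ Ca) (htCb : t ∉ Cb)
    (p : U.Walk s t) (hp : p.IsPath) (hpC : ∀ z ∈ p.support, z = s ∨ z = t ∨ z ∈ Ca)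
    (hpch : ∀ u v, u ∈ p.support → v ∈ p.support → U.Adj u v → s(u, v) ∈ p.edges)
    (q : U.Walk s t) (hq : q.IsPath) (hqC : ∀ z ∈ q.support, z = s ∨ z = t ∨ z ∈ Cb)
    (hqch : ∀ u v, u ∈ q.support → v ∈ q.support → U.Adj u v → s(u, v) ∈ q.edges) :
    U.Adj s t := by
  classical
  by_contra hnadj
  have hplen : 2 ≤ p.length := by
    rcases Nat.lt_or_ge p.length 2 with h | h
    · interval_cases h' : p.length
      · exact (hst (SimpleGraph.Walk.eq_of_length_eq_zero h')).elim
      · exact (hnadj (adj_of_length_one p h')).elim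
    · exact h
  have hqlen : 2 ≤ q.length := by
    rcases Nat.lt_or_ge q.length 2 with h | h
    · interval_cases h' : q.length
      · exact (hst (SimpleGraph.Walk.eq_of_length_eq_zero h')).elim
      · exact (hnadj (adj_of_length_one q h')).elim
    · exact h
  set c : U.Walk s s := p.append q.reverse with hc
  have hclen : 4 ≤ c.length := by
    rw [hc, SimpleGraph.Walk.length_append, SimpleGraph.Walk.length_reverse]
    omega
  have hcsup : ∀ z, z ∈ c.support → z ∈ p.support ∨ z ∈ q.support := by
    intro z hz
    rw [hc, SimpleGraph.Walk.mem_support_append_iff] at hz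
    rcases hz with hz | hz
    · exact Or.inl hz
    · rw [SimpleGraph.Walk.support_reverse, List.mem_reverse] at hz
      exact Or.inr hz
  -- membership of edges
  have hpe : ∀ e ∈ p.edges, e ∈ c.edges := by
    intro e he; rw [hc, SimpleGraph.Walk.edges_append]; exact List.mem_append_left _ he
  have hqe : ∀ e ∈ q.edges, e ∈ c.edges := by
    intro e he; rw [hc, SimpleGraph.Walk.edges_append]
    refine List.mem_append_right _ ?_
    rw [SimpleGraph.Walk.edges_reverse, List.mem_reverse]; exact he
  -- only s t are common to both supports
  have hcommon : ∀ z, z ∈ p.support → z ∈ q.support → z = s ∨ z = t := by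
    intro z hzp hzq
    rcases hpC z hzp with h | h | h
    · exact Or.inl h
    · exact Or.inr h
    · rcases hqC z hzq with h' | h' | h'
      · exact Or.inl h'
      · exact Or.inr h'
      · exact absurd h' (hdisj z h)
  have hcycle : c.IsCycle := by
    refine ⟨⟨⟨?_⟩, ?_⟩, ?_⟩
    · -- edges nodup
      rw [hc, SimpleGraph.Walk.edges_append, List.nodup_append]
      refine ⟨hp.edges_nodup, ?_, ?_⟩
      · rw [SimpleGraph.Walk.edges_reverse, List.nodup_reverse]
        exact hq.edges_nodup
      · intro e hep e' heq hee
        subst hee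
        rw [SimpleGraph.Walk.edges_reverse, List.mem_reverse] at heq
        revert hep heq
        refine Sym2.ind (fun x y => ?_) e
        intro hep heq
        have hxp := SimpleGraph.Walk.fst_mem_support_of_mem_edges p hep
        have hyp := SimpleGraph.Walk.snd_mem_support_of_mem_edges p hep
        have hxq := SimpleGraph.Walk.fst_mem_support_of_mem_edges q heq
        have hyq := SimpleGraph.Walk.snd_mem_support_of_mem_edges q heq
        have hadj : U.Adj x y := SimpleGraph.Walk.adj_of_mem_edges p hep
        rcases hcommon x hxp hxq with hx | hx <;> rcases hcommon y hyp hyq with hy | hy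
        · rw [hx, hy] at hadj; exact U.irrefl hadj
        · rw [hx, hy] at hadj; exact hnadj hadj
        · rw [hx, hy] at hadj; exact hnadj hadj.symm
        · rw [hx, hy] at hadj; exact U.irrefl hadj
    · -- c ≠ nil
      intro h
      rw [h] at hclen
      simp at hclen
    · -- support tail nodup
      rw [hc, SimpleGraph.Walk.tail_support_append, List.nodup_append]
      have hsp : s ∉ p.support.tail := by
        have := hp.support_nodup
        rw [p.support_eq_cons] at this
        exact (List.nodup_cons.mp this).1
      have htq : t ∉ q.reverse.support.tail := by
        have := hq.reverse.support_nodup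
        rw [q.reverse.support_eq_cons] at this
        exact (List.nodup_cons.mp this).1
      refine ⟨hp.support_nodup.tail, hq.reverse.support_nodup.tail, ?_⟩
      intro z hzp z' hzq hzz
      subst hzz
      have hzp' : z ∈ p.support := List.mem_of_mem_tail hzp
      have hzq' : z ∈ q.support := by
        have := List.mem_of_mem_tail hzq
        rw [SimpleGraph.Walk.support_reverse, List.mem_reverse] at this
        exact this
      have hzs : z ≠ s := fun h => by subst h; exact hsp hzp
      have hzt : z ≠ t := fun h => by subst h; exact htq hzq
      rcases hcommon z hzp' hzq' with h | h
      · exact hzs h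
      · exact hzt h
  obtain ⟨a, b, ha, hb, hadj, hne⟩ := hU c hcycle hclen
  rcases hcsup a ha with hap | haq <;> rcases hcsup b hb with hbp | hbq
  · exact hne (hpe _ (hpch a b hap hbp hadj))
  · -- a in p, b in q
    by_cases hbp : b ∈ p.support
    · exact hne (hpe _ (hpch a b hap hbp hadj))
    by_cases haq : a ∈ q.support
    · exact hne (hqe _ (hqch a b haq hbq hadj))
    have haCa : a ∈ Ca := by
      rcases hpC a hap with h | h | h
      · exact absurd (h ▸ q.start_mem_support) haq
      · exact absurd (h ▸ q.end_mem_support) haq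
      · exact h
    have hbCb : b ∈ Cb := by
      rcases hqC b hbq with h | h | h
      · exact absurd (h ▸ p.start_mem_support) hbp
      · exact absurd (h ▸ p.end_mem_support) hbp
      · exact h
    exact hsep a haCa b hbCb hadj
  · -- a in q, b in p  (symmetric)
    by_cases hap : a ∈ p.support
    · exact hne (hpe _ (hpch a b hap hbp hadj))
    by_cases hbq : b ∈ q.support
    · exact hne (hqe _ (hqch a b haq hbq hadj))
    have hbCa : b ∈ Ca := by
      rcases hpC b hbp with h | h | h
      · exact absurd (h ▸ q.start_mem_support) hbq
      · exact absurd (h ▸ q.end_mem_support) hbq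
      · exact h
    have haCb : a ∈ Cb := by
      rcases hqC a haq with h | h | h
      · exact absurd (h ▸ p.start_mem_support) hap
      · exact absurd (h ▸ p.end_mem_support) hap
      · exact h
    exact hsep b hbCa a haCb hadj.symm
  · exact hne (hqe _ (hqch a b haq hbq hadj))

/-- `v` is simplicial within `S`: its neighbors inside `S` form a clique. -/
def Simp (U : SimpleGraph V) (S : Finset V) (v : V) : Prop :=
  ∀ a ∈ S, ∀ b ∈ S, U.Adj v a → U.Adj v b → a ≠ b → U.Adj a b

theorem reach_subsingleton {a b : V} (hnadj : ¬ U.Adj a b) {W : Set V}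
    (hW : W ⊆ {a, b}) : ∀ z, Reach U W a z → z = a := by
  intro z hz
  induction hz with
  | refl => rfl
  | @tail c d h step ih =>
    subst ih
    rcases hW step.2.1 with h' | h'
    · exact absurd (h' ▸ step.2.2) U.irrefl
    · simp only [Set.mem_singleton_iff] at h'
      subst h'
      exact absurd step.2.2 hnadj

/-- Dirac's theorem, strong form, relative to an ambient chordal graph. -/
theorem dirac (hU : ChordalGraph U) (S : Finset V) : (S.Nonempty →
    ∃ v ∈ S, Simp U S v) ∧
    (∀ a ∈ S, ∀ b ∈ S, a ≠ b → ¬ U.Adj a b →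
      ∃ v ∈ S, ∃ w ∈ S, Simp U S v ∧ Simp U S w ∧ v ≠ w ∧ ¬ U.Adj v w) := by
  classical
  induction S using Finset.strongInduction with
  | _ S ih =>
  have part2 : ∀ a ∈ S, ∀ b ∈ S, a ≠ b → ¬ U.Adj a b →
      ∃ v ∈ S, ∃ w ∈ S, Simp U S v ∧ Simp U S w ∧ v ≠ w ∧ ¬ U.Adj v w := by
    intro a ha b hb hab hnadj
    -- separators exist
    set P : Finset V → Prop :=
      fun T => T ⊆ S ∧ a ∉ T ∧ b ∉ T ∧ ¬ Reach U (↑S \ ↑T) a b with hP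
    have hP0 : P ((S.erase a).erase b) := by
      refine ⟨(Finset.erase_subset _ _).trans (Finset.erase_subset _ _), ?_, ?_, ?_⟩
      · intro h
        exact (Finset.mem_erase.mp (Finset.mem_of_mem_erase h)).1 rfl
      · intro h
        exact (Finset.mem_erase.mp h).1 rfl
      · intro hreach
        have hsub : (↑S \ ↑((S.erase a).erase b) : Set V) ⊆ {a, b} := by
          intro x hx
          simp only [Set.mem_diff, Finset.coe_erase, Set.mem_diff,
            Finset.mem_coe, Set.mem_singleton_iff] at hx
          by_contra hcon
          simp only [Set.mem_insert_iff, Set.mem_singleton_iff] at hcon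
          push_neg at hcon
          exact hx.2 ⟨⟨hx.1, hcon.1⟩, hcon.2⟩
        exact hab.symm (reach_subsingleton hnadj hsub b hreach)
    have hex : ∃ n, ∃ T, P T ∧ T.card = n := ⟨_, _, hP0, rfl⟩
    obtain ⟨T, hT, hTcard⟩ := Nat.find_spec hex
    have hmin : ∀ T', P T' → T.card ≤ T'.card := by
      intro T' hT'
      rw [hTcard]
      exact Nat.find_min' hex ⟨T', hT', rfl⟩
    obtain ⟨hTS, haT, hbT, hTreach⟩ := hT
    set W : Set V := ↑S \ ↑T with hW
    set Ca : Set V := {x | x ∈ W ∧ Reach U W a x} with hCa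
    set Cb : Set V := {x | x ∈ W ∧ Reach U W b x} with hCb
    have haW : a ∈ W := ⟨ha, haT⟩
    have hbW : b ∈ W := ⟨hb, hbT⟩
    have haCa : a ∈ Ca := ⟨haW, Reach.refl⟩
    have hbCb : b ∈ Cb := ⟨hbW, Reach.refl⟩
    have hdisj : ∀ x, x ∈ Ca → x ∉ Cb := by
      rintro x ⟨hx1, hx2⟩ ⟨hy1, hy2⟩
      exact hTreach (hx2.trans hy2.symm)
    have hclosure : ∀ x, x ∈ Ca → ∀ z, z ∈ W → U.Adj x z → z ∈ Ca := by
      rintro x ⟨hx1, hx2⟩ z hz hadj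
      exact ⟨hz, hx2.tail hx1 hz hadj⟩
    have hclosureb : ∀ x, x ∈ Cb → ∀ z, z ∈ W → U.Adj x z → z ∈ Cb := by
      rintro x ⟨hx1, hx2⟩ z hz hadj
      exact ⟨hz, hx2.tail hx1 hz hadj⟩
    have hsep : ∀ x ∈ Ca, ∀ y ∈ Cb, ¬ U.Adj x y := by
      intro x hx y hy hadj
      exact hdisj y (hclosure x hx y hy.1 hadj) hy
    -- every vertex of T has neighbors in both components
    have hnbrs : ∀ s ∈ T, (∃ x ∈ Ca, U.Adj x s) ∧ (∃ y ∈ Cb, U.Adj s y) := by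
      intro s hsT
      have hsS : s ∈ S := hTS hsT
      have hcard : (T.erase s).card < T.card := Finset.card_erase_lt_of_mem hsT
      have hnP : ¬ P (T.erase s) := fun h => absurd (hmin _ h) (by omega)
      have hreach : Reach U (↑S \ ↑(T.erase s)) a b := by
        by_contra h
        exact hnP ⟨(Finset.erase_subset _ _).trans hTS,
          fun hc => haT (Finset.mem_of_mem_erase hc),
          fun hc => hbT (Finset.mem_of_mem_erase hc), h⟩
      have hseteq : (↑S \ ↑(T.erase s) : Set V) = insert s W := by
        ext x
        simp only [Set.mem_diff, Finset.coe_erase, Set.mem_diff, Finset.mem_coe,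
          Set.mem_insert_iff, hW]
        constructor
        · rintro ⟨hxS, hx⟩
          by_cases hxs : x = s
          · exact Or.inl hxs
          · exact Or.inr ⟨hxS, fun hxT => hx ⟨hxT, hxs⟩⟩
        · rintro (rfl | ⟨hxS, hxT⟩)
          · exact ⟨hsS, fun hc => hc.2 rfl⟩
          · exact ⟨hxS, fun hc => hxT hc.1⟩
      rw [hseteq] at hreach
      have has : a ≠ s := fun h => haT (h ▸ hsT)
      have hbs : b ≠ s := fun h => hbT (h ▸ hsT)
      rcases (reach_insert has hreach).2 hbs with h | ⟨⟨x, hx1, hx2⟩, ⟨y, hy1, hy2, hy3⟩⟩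
      · exact absurd h hTreach
      · refine ⟨⟨x, ?_, hx2⟩, ⟨y, ⟨hy1, hy3.symm⟩, hy2⟩⟩
        rcases hx1.mem_right with h | h
        · exact h ▸ haCa
        · exact ⟨h, hx1⟩
    -- T is a clique
    have hTclique : ∀ s ∈ T, ∀ t ∈ T, s ≠ t → U.Adj s t := by
      intro s hsT t htT hst
      have hsW : s ∉ W := fun h => h.2 hsT
      have htW : t ∉ W := fun h => h.2 htT
      have hsCa : s ∉ Ca := fun h => hsW h.1
      have hsCb : s ∉ Cb := fun h => hsW h.1
      have htCa : t ∉ Ca := fun h => htW h.1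
      have htCb : t ∉ Cb := fun h => htW h.1
      obtain ⟨⟨xs, hxs, hxsadj⟩, -⟩ := hnbrs s hsT
      obtain ⟨⟨xt, hxt, hxtadj⟩, -⟩ := hnbrs t htT
      obtain ⟨-, ⟨ys, hys, hysadj⟩⟩ := hnbrs s hsT
      obtain ⟨-, ⟨yt, hyt, hytadj⟩⟩ := hnbrs t htT
      -- build a walk s → t through Ca
      have hwalkCa : ∃ w : U.Walk s t, ∀ z ∈ w.support, z ∈ {z | z = s ∨ z = t ∨ z ∈ Ca} := by
        obtain ⟨w1, hw1⟩ := reach_walk (U := U) hxs.2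
        obtain ⟨w2, hw2⟩ := reach_walk (U := U) hxt.2
        refine ⟨SimpleGraph.Walk.cons hxsadj.symm
          ((w1.reverse.append w2).append (SimpleGraph.Walk.cons hxtadj SimpleGraph.Walk.nil)), ?_⟩
        intro z hz
        simp only [SimpleGraph.Walk.support_cons, List.mem_cons,
          SimpleGraph.Walk.mem_support_append_iff, SimpleGraph.Walk.support_reverse,
          List.mem_reverse, SimpleGraph.Walk.support_nil] at hz
        simp only [Set.mem_setOf_eq]
        rcases hz with rfl | (hz | hz) | hz
        · exact Or.inl rfl
        · refine Or.inr (Or.inr ?_)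
          obtain ⟨hr, hm⟩ := hw1 z hz
          rcases hm with rfl | hm
          · exact haCa
          · exact ⟨hm, hr⟩
        · refine Or.inr (Or.inr ?_)
          obtain ⟨hr, hm⟩ := hw2 z hz
          rcases hm with rfl | hm
          · exact haCa
          · exact ⟨hm, hr⟩
        · rcases hz with rfl | hz
          · exact Or.inr (Or.inr hxt)
          · simp only [List.mem_cons, List.not_mem_nil, or_false] at hz
            subst hz
            exact Or.inr (Or.inl rfl)
      have hwalkCb : ∃ w : U.Walk s t, ∀ z ∈ w.support, z ∈ {z | z = s ∨ z = t ∨ z ∈ Cb} := by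
        obtain ⟨w1, hw1⟩ := reach_walk (U := U) hys.2
        obtain ⟨w2, hw2⟩ := reach_walk (U := U) hyt.2
        refine ⟨SimpleGraph.Walk.cons hysadj
          ((w1.reverse.append w2).append (SimpleGraph.Walk.cons hytadj.symm SimpleGraph.Walk.nil)), ?_⟩
        intro z hz
        simp only [SimpleGraph.Walk.support_cons, List.mem_cons,
          SimpleGraph.Walk.mem_support_append_iff, SimpleGraph.Walk.support_reverse,
          List.mem_reverse, SimpleGraph.Walk.support_nil] at hz
        simp only [Set.mem_setOf_eq]
        rcases hz with rfl | (hz | hz) | hz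
        · exact Or.inl rfl
        · refine Or.inr (Or.inr ?_)
          obtain ⟨hr, hm⟩ := hw1 z hz
          rcases hm with rfl | hm
          · exact hbCb
          · exact ⟨hm, hr⟩
        · refine Or.inr (Or.inr ?_)
          obtain ⟨hr, hm⟩ := hw2 z hz
          rcases hm with rfl | hm
          · exact hbCb
          · exact ⟨hm, hr⟩
        · rcases hz with rfl | hz
          · exact Or.inr (Or.inr hyt)
          · simp only [List.mem_cons, List.not_mem_nil, or_false] at hz
            subst hz
            exact Or.inr (Or.inl rfl)
      obtain ⟨wa, hwa⟩ := hwalkCa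
      obtain ⟨wb, hwb⟩ := hwalkCb
      obtain ⟨p, hp1, hp2, hp3⟩ := exists_chordless_path wa hwa
      obtain ⟨q, hq1, hq2, hq3⟩ := exists_chordless_path wb hwb
      exact adj_of_two_paths hU hst hdisj hsep hsCa hsCb htCa htCb p hp1
        (fun z hz => hp2 z hz) hp3 q hq1 (fun z hz => hq2 z hz) hq3
    -- apply induction hypothesis to both sides
    have side : ∀ (c : V) (Cc : Set V) (d : V), c ∈ S → c ∈ Cc →
        (∀ x, x ∈ Cc → ∀ z, z ∈ W → U.Adj x z → z ∈ Cc) →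
        d ∈ S → d ∉ Cc → d ∉ T →
        ∃ v, v ∈ Cc ∧ v ∈ S ∧ Simp U S v := by
      intro c Cc d hcS hcCc hCcClosed hdS hdCc hdT
      set Fc : Finset V := S.filter (· ∈ Cc) ∪ T with hFc
      have hFcmem : ∀ x, x ∈ Fc ↔ (x ∈ S ∧ x ∈ Cc) ∨ x ∈ T := by
        intro x
        simp [hFc, Finset.mem_union, Finset.mem_filter]
      have hFcS : Fc ⊆ S := by
        intro x hx
        rcases (hFcmem x).mp hx with hx | hx
        · exact hx.1
        · exact hTS hx
      have hFcssub : Fc ⊂ S := by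
        refine Finset.ssubset_iff_of_subset hFcS |>.mpr ?_
        refine ⟨d, hdS, fun hc => ?_⟩
        rcases (hFcmem d).mp hc with hc | hc
        · exact hdCc hc.2
        · exact hdT hc
      have hlift : ∀ v, v ∈ Cc → Simp U Fc v → Simp U S v := by
        intro v hvCc hsimp
        have hnb : ∀ x ∈ S, U.Adj v x → x ∈ Fc := by
          intro x hxS hadj
          by_cases hxT : x ∈ T
          · exact (hFcmem x).mpr (Or.inr hxT)
          · exact (hFcmem x).mpr (Or.inl ⟨hxS, hCcClosed v hvCc x ⟨hxS, hxT⟩ hadj⟩)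
        intro a' ha' b' hb' hadj1 hadj2 hne
        exact hsimp a' (hnb a' ha' hadj1) b' (hnb b' hb' hadj2) hadj1 hadj2 hne
      obtain ⟨-, p2⟩ := ih Fc hFcssub
      by_cases hcomp : ∀ x ∈ Fc, ∀ y ∈ Fc, x ≠ y → U.Adj x y
      · refine ⟨c, hcCc, hcS, hlift c hcCc ?_⟩
        intro a' ha' b' hb' _ _ hne
        exact hcomp a' ha' b' hb' hne
      · push_neg at hcomp
        obtain ⟨x, hx, y, hy, hxy, hxynadj⟩ := hcomp
        obtain ⟨v, hv, w, hw, hvS, hwS, hvw, hvwnadj⟩ := p2 x hx y hy hxy hxynadj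
        have hvw' : v ∉ T ∨ w ∉ T := by
          by_contra hcon
          push_neg at hcon
          exact hvwnadj (hTclique v hcon.1 w hcon.2 hvw)
        rcases hvw' with hvT | hwT
        · have := (hFcmem v).mp hv
          rcases this with h | h
          · exact ⟨v, h.2, h.1, hlift v h.2 hvS⟩
          · exact absurd h hvT
        · have := (hFcmem w).mp hw
          rcases this with h | h
          · exact ⟨w, h.2, h.1, hlift w h.2 hwS⟩
          · exact absurd h hwT
    obtain ⟨va, hvaCa, hvaS, hvaSimp⟩ :=
      side a Ca b ha haCa hclosure hb (fun h => hdisj b h hbCb) hbT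
    obtain ⟨wb, hwbCb, hwbS, hwbSimp⟩ :=
      side b Cb a hb hbCb hclosureb ha (fun h => hdisj a haCa h) haT
    refine ⟨va, hvaS, wb, hwbS, hvaSimp, hwbSimp, ?_, hsep va hvaCa wb hwbCb⟩
    intro h
    exact hdisj va hvaCa (h ▸ hwbCb)
  constructor
  · intro hS
    by_cases hcomp : ∀ x ∈ S, ∀ y ∈ S, x ≠ y → U.Adj x y
    · obtain ⟨v, hv⟩ := hS
      exact ⟨v, hv, fun a ha b hb _ _ hab => hcomp a ha b hb hab⟩
    · push_neg at hcomp
      obtain ⟨x, hx, y, hy, hxy, hnadj⟩ := hcomp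
      obtain ⟨v, hv, w, hw, hv', hw', hvw, hnadj'⟩ := part2 x hx y hy hxy hnadj
      exact ⟨v, hv, hv'⟩
  · exact part2

theorem finite_order (hU : ChordalGraph U) {A B : V} (hAB : U.Adj A B) (S : Finset V) :
    ∃ f : V → V → Prop,
      (∀ x ∈ S, ¬ f x x) ∧
      (∀ x ∈ S, ∀ y ∈ S, ∀ z ∈ S, f x y → f y z → f x z) ∧
      (∀ x ∈ S, ∀ y ∈ S, x ≠ y → f x y ∨ f y x) ∧
      (A ∈ S → B ∈ S → f A B) ∧
      (∀ a ∈ S, ∀ b ∈ S, ∀ c ∈ S, U.Adj a b → f a b → U.Adj c b → f c b → a ≠ c → U.Adj a c) := by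
  classical
  induction S using Finset.strongInduction with
  | _ S ih =>
  rcases S.eq_empty_or_nonempty with rfl | hS
  · exact ⟨fun _ _ => False, by simp, by simp, by simp, by simp, by simp⟩
  have hv : ∃ v ∈ S, Simp U S v ∧ (A ∈ S → B ∈ S → v ≠ A) := by
    by_cases hA : A ∈ S ∧ B ∈ S
    · have hABne : A ≠ B := U.ne_of_adj hAB
      by_cases hcomp : ∀ x ∈ S, ∀ y ∈ S, x ≠ y → U.Adj x y
      · have : (S.erase A).Nonempty := by
          refine Finset.card_pos.mp ?_
          rw [Finset.card_erase_of_mem hA.1]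
          have h2 : 2 ≤ S.card := Finset.one_lt_card.mpr ⟨A, hA.1, B, hA.2, hABne⟩
          omega
        obtain ⟨v, hv⟩ := this
        have hvS := Finset.mem_of_mem_erase hv
        exact ⟨v, hvS, fun a ha b hb _ _ hne => hcomp a ha b hb hne,
          fun _ _ => (Finset.mem_erase.mp hv).1⟩
      · push_neg at hcomp
        obtain ⟨x, hx, y, hy, hxy, hxynadj⟩ := hcomp
        obtain ⟨v, hvS, w, hwS, hvSimp, hwSimp, hvw, -⟩ :=
          (dirac hU S).2 x hx y hy hxy hxynadj
        by_cases hvA : v = A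
        · exact ⟨w, hwS, hwSimp, fun _ _ h => hvw (hvA.trans h.symm)⟩
        · exact ⟨v, hvS, hvSimp, fun _ _ => hvA⟩
    · obtain ⟨v, hvS, hvSimp⟩ := (dirac hU S).1 hS
      exact ⟨v, hvS, hvSimp, fun h1 h2 => absurd ⟨h1, h2⟩ hA⟩
  obtain ⟨v, hvS, hvSimp, hvA⟩ := hv
  obtain ⟨f', h1, h2, h3, h4, h5⟩ := ih (S.erase v) (Finset.erase_ssubset hvS)
  set E := S.erase v with hE
  refine ⟨fun x y => (y = v ∧ x ∈ E) ∨ (x ∈ E ∧ y ∈ E ∧ f' x y), ?_, ?_, ?_, ?_, ?_⟩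
  · rintro x hxS (⟨rfl, hx⟩ | ⟨hx, -, hf⟩)
    · exact (Finset.mem_erase.mp hx).1 rfl
    · exact h1 x hx hf
  · rintro x hxS y hyS z hzS (⟨rfl, hx⟩ | ⟨hx, hy, hf⟩) hyz
    · rcases hyz with ⟨rfl, hy⟩ | ⟨hy, -, -⟩
      · exact absurd rfl (Finset.mem_erase.mp hy).1
      · exact absurd rfl (Finset.mem_erase.mp hy).1
    · rcases hyz with ⟨rfl, hy'⟩ | ⟨hy', hz, hf'⟩
      · exact Or.inl ⟨rfl, hx⟩
      · exact Or.inr ⟨hx, hz, h2 x hx y hy z hz hf hf'⟩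
  · intro x hxS y hyS hxy
    by_cases hxv : x = v
    · subst hxv
      exact Or.inr (Or.inl ⟨rfl, Finset.mem_erase.mpr ⟨Ne.symm hxy, hyS⟩⟩)
    by_cases hyv : y = v
    · subst hyv
      exact Or.inl (Or.inl ⟨rfl, Finset.mem_erase.mpr ⟨hxv, hxS⟩⟩)
    · have hxE : x ∈ E := Finset.mem_erase.mpr ⟨hxv, hxS⟩
      have hyE : y ∈ E := Finset.mem_erase.mpr ⟨hyv, hyS⟩
      rcases h3 x hxE y hyE hxy with h | h
      · exact Or.inl (Or.inr ⟨hxE, hyE, h⟩)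
      · exact Or.inr (Or.inr ⟨hyE, hxE, h⟩)
  · intro hAS hBS
    have hvA' := hvA hAS hBS
    by_cases hBv : B = v
    · exact Or.inl ⟨hBv, Finset.mem_erase.mpr ⟨fun h => hvA' h.symm, hAS⟩⟩
    · have hAE : A ∈ E := Finset.mem_erase.mpr ⟨fun h => hvA' h.symm, hAS⟩
      have hBE : B ∈ E := Finset.mem_erase.mpr ⟨hBv, hBS⟩
      exact Or.inr ⟨hAE, hBE, h4 hAE hBE⟩
  · rintro a haS b hbS c hcS hab (⟨rfl, haE⟩ | ⟨haE, hbE, hfab⟩) hcb hfcb hac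
    · rcases hfcb with ⟨-, hcE⟩ | ⟨-, hbE, -⟩
      · exact hvSimp a haS c hcS hab.symm hcb.symm hac
      · exact absurd rfl (Finset.mem_erase.mp hbE).1
    · rcases hfcb with ⟨hbv, -⟩ | ⟨hcE, -, hfcb'⟩
      · exact absurd hbv (Finset.mem_erase.mp hbE).1
      · exact h5 a haE b hbE c hcE hab hfab hcb hfcb' hac


theorem topo (D : V → V → Prop) (hD : ¬ ∃ a, Relation.TransGen D a a) :
    ∃ r : V → V → Prop, IsStrictTotalOrder V r ∧ ∀ x y, D x y → r x y := by
  classical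
  haveI : IsPartialOrder V (Relation.ReflTransGen D) := by
    refine { refl := fun a => .refl, trans := fun a b c => .trans, antisymm := ?_ }
    intro a b hab hba
    by_contra hne
    rcases Relation.reflTransGen_iff_eq_or_transGen.1 hab with h | h
    · exact hne h.symm
    rcases Relation.reflTransGen_iff_eq_or_transGen.1 hba with h' | h'
    · exact hne h'
    exact hD ⟨a, h.trans h'⟩
  obtain ⟨s, hs, hps⟩ := extend_partialOrder (Relation.ReflTransGen D)
  haveI : IsLinearOrder V s := hs
  have hanti : ∀ a b, s a b → s b a → a = b := fun a b => antisymm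
  refine ⟨fun x y => s x y ∧ x ≠ y, ?_, ?_⟩
  · refine { trichotomous := ?_, irrefl := fun a h => h.2 rfl, trans := ?_ }
    · intro a b h1 h2
      by_cases h : a = b
      · exact h
      rcases total_of s a b with hab | hba
      · exact absurd ⟨hab, h⟩ h1
      · exact absurd ⟨hba, Ne.symm h⟩ h2
    · rintro a b c ⟨hab, hab'⟩ ⟨hbc, hbc'⟩
      have hac := Trans.trans hab hbc
      refine ⟨hac, fun h => ?_⟩
      subst h
      exact hab' (hanti _ _ hab hbc)
  · intro x y hxy
    refine ⟨hps x y (Relation.ReflTransGen.single hxy), fun h => ?_⟩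
    subst h
    exact hD ⟨x, Relation.TransGen.single hxy⟩


theorem exists_good_order (hU : ChordalGraph U) {A B : V} (hAB : U.Adj A B) :
    ∃ r : V → V → Prop, IsStrictTotalOrder V r ∧ r A B ∧
      (¬ ∃ a, Relation.TransGen (fun x y => U.Adj x y ∧ r x y) a a) ∧ ¬ HasUCWrt U r := by
  classical
  choose f hf1 hf2 hf3 hf4 hf5 using fun S => finite_order hU hAB S
  obtain ⟨F, hF⟩ := Filter.exists_ultrafilter_le (Filter.atTop : Filter (Finset V))
  have hmem : ∀ T : Finset V, {S | T ⊆ S} ∈ F := by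
    intro T
    exact hF (Filter.mem_atTop T)
  set r : V → V → Prop := fun x y => {S | f S x y} ∈ F with hr
  have hirr : ∀ x, ¬ r x x := by
    intro x hx
    have h2 : {S | ({x} : Finset V) ⊆ S} ∩ {S | f S x x} ∈ F := Filter.inter_mem (hmem {x}) hx
    obtain ⟨S, hS1, hS2⟩ := Filter.nonempty_of_mem h2
    exact hf1 S x (by simpa using hS1) hS2
  have htrans : ∀ x y z, r x y → r y z → r x z := by
    intro x y z hxy hyz
    have h2 : {S | ({x, y, z} : Finset V) ⊆ S} ∩ ({S | f S x y} ∩ {S | f S y z}) ∈ F :=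
      Filter.inter_mem (hmem _) (Filter.inter_mem hxy hyz)
    refine F.toFilter.mem_of_superset h2 ?_
    rintro S ⟨hS1, hS2, hS3⟩
    have hx : x ∈ S := hS1 (by simp)
    have hy : y ∈ S := hS1 (by simp)
    have hz : z ∈ S := hS1 (by simp)
    exact hf2 S x hx y hy z hz hS2 hS3
  have htot : ∀ x y, x ≠ y → r x y ∨ r y x := by
    intro x y hne
    have h2 : {S | f S x y} ∪ {S | f S y x} ∈ F := by
      refine F.toFilter.mem_of_superset (hmem {x, y}) ?_
      intro S hS
      have hx : x ∈ S := hS (by simp)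
      have hy : y ∈ S := hS (by simp)
      exact hf3 S x hx y hy hne
    exact Ultrafilter.union_mem_iff.mp h2
  have hsto : IsStrictTotalOrder V r := by
    refine { trichotomous := ?_, irrefl := hirr, trans := htrans }
    intro a b h1 h2
    by_cases h : a = b
    · exact h
    rcases htot a b h with h' | h'
    · exact absurd h' h1
    · exact absurd h' h2
  have hAB' : r A B := by
    refine F.toFilter.mem_of_superset (hmem {A, B}) ?_
    intro S hS
    exact hf4 S (hS (by simp)) (hS (by simp))
  refine ⟨r, hsto, hAB', ?_, ?_⟩
  · rintro ⟨a, ha⟩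
    have : Relation.TransGen r a a := Relation.TransGen.mono (fun x y h => h.2) a a ha
    rw [@Relation.transGen_eq_self _ _ ⟨htrans⟩] at this
    exact hirr a this
  · rintro ⟨a, b, c, ⟨hab, hrab⟩, ⟨hcb, hrcb⟩, hac, hnadj⟩
    have h2 : {S | ({a, b, c} : Finset V) ⊆ S} ∩ ({S | f S a b} ∩ {S | f S c b}) ∈ F :=
      Filter.inter_mem (hmem _) (Filter.inter_mem hrab hrcb)
    obtain ⟨S, hS1, hS2, hS3⟩ := Filter.nonempty_of_mem h2
    exact hnadj (hf5 S a (hS1 (by simp)) b (hS1 (by simp)) c (hS1 (by simp)) hab hS2 hcb hS3 hac)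


end Stmt19

/-- (1) Every directed acyclic graph admits a topological ordering, and
(2) for a chordal undirected graph U and any adjacent vertices A, B there exist
consistent total orders α (with A < B) and γ (with B < A), each of whose induced
orientations of U is an acyclic directed graph without unshielded colliders. -/
theorem stmt19 {V : Type*} (U : SimpleGraph V) :
    (∀ D : V → V → Prop, (¬ ∃ a, Relation.TransGen D a a) →
      ∃ r : V → V → Prop, IsStrictTotalOrder V r ∧ ∀ x y, D x y → r x y) ∧
    (ChordalGraph U → ∀ A B, U.Adj A B →
      ∃ r₁ r₂ : V → V → Prop,
        IsStrictTotalOrder V r₁ ∧ IsStrictTotalOrder V r₂ ∧ r₁ A B ∧ r₂ B A ∧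
        (¬ ∃ a, Relation.TransGen (fun x y => U.Adj x y ∧ r₁ x y) a a) ∧
        ¬ HasUCWrt U r₁ ∧
        (¬ ∃ a, Relation.TransGen (fun x y => U.Adj x y ∧ r₂ x y) a a) ∧
        ¬ HasUCWrt U r₂) := by
  constructor
  · exact fun D hD => Stmt19.topo D hD
  · intro hU A B hAB
    obtain ⟨r₁, h1, h2, h3, h4⟩ := Stmt19.exists_good_order hU hAB
    obtain ⟨r₂, h1', h2', h3', h4'⟩ := Stmt19.exists_good_order hU hAB.symm
    exact ⟨r₁, r₂, h1, h1', h2, h2', h3, h4, h3', h4'⟩
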